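/- Define f as follows on strictly increasing lists of natural numbers: f([u_1]) = 1, f([u_1,u_2]) = u_2 − u_1, and f([u_1,u_2,…,u_l]) = (u_2 − u_1)·f([u_2,…,u_l]) + f([u_3,…,u_l]) for l > 2. Then for every strictly increasing list of positive integers starting with j and ending with k, one has f ≥ k − j. -/

import Mathlib

/-- The Kleshchev recursion function on lists of integers. -/
def klef : List ℤ → ℤ
  | [] => 0
  | [_] => 1
  | [u₁, u₂] => u₂ - u₁
  | u₁ :: u₂ :: u₃ :: rest => (u₂ - u₁) * klef (u₂ :: u₃ :: rest) + klef (u₃ :: rest)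

lemma klef_aux : ∀ (l : List ℤ), l ≠ [] → l.Chain' (· < ·) →
    1 ≤ klef l ∧ ∀ j k, l.head? = some j → l.getLast? = some k → k - j ≤ klef l
  | [a], _, _ => by
    refine ⟨le_refl _, ?_⟩
    rintro j k hj hk
    simp_all [klef]
  | [a, b], _, h => by
    simp only [List.Chain', List.isChain_cons_cons, List.isChain_singleton, and_true] at h
    refine ⟨by simp [klef]; omega, ?_⟩
    rintro j k hj hk
    simp_all [klef]
  | a :: b :: c :: rest, _, h => by
    simp only [List.Chain', List.isChain_cons_cons] at h
    obtain ⟨hab, hbc, hrest⟩ := h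
    obtain ⟨h1, h2⟩ := klef_aux (b :: c :: rest) (by simp)
      (by simp [List.Chain', List.isChain_cons_cons]; exact ⟨hbc, hrest⟩)
    obtain ⟨h1', h2'⟩ := klef_aux (c :: rest) (by simp)
      (by exact hrest)
    constructor
    · have := mul_le_mul (by omega : (1:ℤ) ≤ b - a) h1 (by norm_num) (by omega)
      simp [klef]; nlinarith
    · rintro j k hj hk
      simp only [List.head?_cons, Option.some.injEq] at hj
      subst hj
      have hk' : (b :: c :: rest).getLast? = some k := by
        rw [← hk]; simp [List.getLast?_cons_cons]
      have hk'' : (c :: rest).getLast? = some k := by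
        rw [← hk']; simp [List.getLast?_cons_cons]
      have hb := h2 b k rfl hk'
      have hc := h2' c k rfl hk''
      simp only [klef]
      nlinarith [mul_nonneg (by omega : (0:ℤ) ≤ b - a - 1) (by omega : (0:ℤ) ≤ klef (b :: c :: rest) - 1),
        mul_le_mul_of_nonneg_left hb (by omega : (0:ℤ) ≤ b - a)]

/-- For every strictly increasing list of positive integers starting with `j` and
ending with `k`, one has `f ≥ k - j`. -/
theorem stmt2 (l : List ℤ) (hne : l ≠ []) (hmono : l.Chain' (· < ·))
    (hpos : ∀ x ∈ l, 0 < x) (j k : ℤ) (hj : l.head? = some j) (hk : l.getLast? = some k) :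
    k - j ≤ klef l := by
  exact (klef_aux l hne hmono).2 j k hj hk
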